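/- Let n ≥ 2 and k ∈ ℕ. In B = ℝ[x₁,…,xₙ,y₁,…,yₙ], the set of products ∏_{t=2}^{n} (x₁·x_t − y₁·y_t)^{h_t} over all tuples (h₂,…,hₙ) of natural numbers with ∑_{t=2}^{n} h_t = k is linearly independent over ℝ, and hence the dimension of its ℝ-linear span equals C(n−2+k, k). The same holds for the set of products ∏_{i=1}^{n−1} (x_i·xₙ − y_i·yₙ)^{h_i} with ∑_{i=1}^{n−1} h_i = k. -/

import Mathlib

open MvPolynomial

/-- x-variables: `Sum.inl`, y-variables: `Sum.inr` (0-based indexing). -/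
noncomputable def xv {n : ℕ} (i : Fin n) : MvPolynomial (Fin n ⊕ Fin n) ℝ := X (Sum.inl i)

noncomputable def yv {n : ℕ} (i : Fin n) : MvPolynomial (Fin n ⊕ Fin n) ℝ := X (Sum.inr i)

/-- The set of products ∏_{t=2}^{n} (x₁ x_t − y₁ y_t)^{h_t} over tuples with ∑ h_t = k
(0-based: x₁ is index 0, t ranges over indices with 0 < t.val). -/
def S1 (n k : ℕ) (hn : 2 ≤ n) : Set (MvPolynomial (Fin n ⊕ Fin n) ℝ) :=
  {f | ∃ h : Fin n → ℕ,
    (∑ t ∈ Finset.univ.filter (fun t : Fin n => 0 < t.val), h t) = k ∧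
    f = ∏ t ∈ Finset.univ.filter (fun t : Fin n => 0 < t.val),
      (xv (⟨0, by omega⟩ : Fin n) * xv t - yv (⟨0, by omega⟩ : Fin n) * yv t) ^ h t}

/-- The set of products ∏_{i=1}^{n−1} (x_i xₙ − y_i yₙ)^{h_i} over tuples with ∑ h_i = k
(0-based: xₙ is index n−1, i ranges over indices with i.val < n−1). -/
def S2 (n k : ℕ) (hn : 2 ≤ n) : Set (MvPolynomial (Fin n ⊕ Fin n) ℝ) :=
  {f | ∃ h : Fin n → ℕ,
    (∑ i ∈ Finset.univ.filter (fun i : Fin n => i.val < n - 1), h i) = k ∧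
    f = ∏ i ∈ Finset.univ.filter (fun i : Fin n => i.val < n - 1),
      (xv i * xv (⟨n - 1, by omega⟩ : Fin n) - yv i * yv (⟨n - 1, by omega⟩ : Fin n)) ^ h i}

/-- Substitution sending each `y` variable to `0` and fixing each `x` variable. -/
noncomputable def phiY (n : ℕ) :
    MvPolynomial (Fin n ⊕ Fin n) ℝ →ₐ[ℝ] MvPolynomial (Fin n ⊕ Fin n) ℝ :=
  aeval (Sum.elim (fun i => X (Sum.inl i)) (fun _ => 0))

lemma prod_monomial {ι σ : Type*} (F : Finset ι) (g : ι → (σ →₀ ℕ)) :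
    ∏ t ∈ F, (monomial (g t) (1 : ℝ)) = monomial (∑ t ∈ F, g t) 1 := by
  classical
  induction F using Finset.induction_on with
  | empty => simp
  | insert _ _ hx ih =>
    rw [Finset.prod_insert hx, Finset.sum_insert hx, ih, monomial_mul, one_mul]

/-- The exponent of the monomial obtained from the product after killing the `y`s. -/
noncomputable def Dfun {n : ℕ} (i0 : Fin n) (F : Finset (Fin n)) (k : ℕ) (h : Fin n → ℕ) :
    (Fin n ⊕ Fin n) →₀ ℕ :=
  Finsupp.single (Sum.inl i0) k + ∑ t ∈ F, Finsupp.single (Sum.inl t) (h t)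

lemma single_sum' {ι σ : Type*} (F : Finset ι) (a : σ) (h : ι → ℕ) :
    Finsupp.single a (∑ t ∈ F, h t) = ∑ t ∈ F, Finsupp.single a (h t) := by
  classical
  induction F using Finset.induction_on with
  | empty => simp
  | insert _ _ hx ih => rw [Finset.sum_insert hx, Finset.sum_insert hx, Finsupp.single_add, ih]

lemma phi_prod {n : ℕ} (i0 : Fin n) (F : Finset (Fin n)) (k : ℕ) (h : Fin n → ℕ)
    (hsum : ∑ t ∈ F, h t = k) :
    (phiY n) (∏ t ∈ F, (xv i0 * xv t - yv i0 * yv t) ^ h t) = monomial (Dfun i0 F k h) 1 := by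
  rw [map_prod]
  have key : ∀ t ∈ F, (phiY n) ((xv i0 * xv t - yv i0 * yv t) ^ h t)
      = monomial (Finsupp.single (Sum.inl i0) (h t) + Finsupp.single (Sum.inl t) (h t)) 1 := by
    intro t _
    rw [map_pow]
    have h1 : (phiY n) (xv i0 * xv t - yv i0 * yv t) = X (Sum.inl i0) * X (Sum.inl t) := by
      simp [phiY, xv, yv]
    rw [h1, mul_pow, X_pow_eq_monomial, X_pow_eq_monomial, monomial_mul, one_mul]
  rw [Finset.prod_congr rfl key, prod_monomial]
  congr 1
  unfold Dfun
  rw [Finset.sum_add_distrib, ← hsum, single_sum']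

lemma D_apply {n : ℕ} (i0 : Fin n) (F : Finset (Fin n)) (hi0 : i0 ∉ F) (k : ℕ) (h : Fin n → ℕ)
    {t : Fin n} (ht : t ∈ F) : Dfun i0 F k h (Sum.inl t) = h t := by
  have hne : i0 ≠ t := fun e => hi0 (e ▸ ht)
  unfold Dfun
  rw [Finsupp.add_apply, Finsupp.finset_sum_apply]
  simp only [Finsupp.single_apply, Sum.inl.injEq]
  rw [if_neg hne, Finset.sum_ite_eq' F t h, if_pos ht, zero_add]

lemma card_piAntidiag {ι : Type*} [DecidableEq ι] (F : Finset ι) (k : ℕ) :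
    (F.piAntidiag k).card = (F.card + k - 1).choose k := by
  classical
  rw [← Fintype.card_coe]
  have e : {f // f ∈ F.piAntidiag k} ≃ {P : ↥F → ℕ // ∑ i, P i = k} :=
    { toFun := fun f => ⟨fun i => f.1 i, by
        have hf := (Finset.mem_piAntidiag.mp f.2).1
        exact (Finset.sum_coe_sort F f.1).trans hf⟩
      invFun := fun P => ⟨fun t => if h : t ∈ F then P.1 ⟨t, h⟩ else 0, by
        rw [Finset.mem_piAntidiag]
        constructor
        · calc (∑ t ∈ F, if h : t ∈ F then P.1 ⟨t, h⟩ else 0)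
              = ∑ i : ↥F, if h : (i : ι) ∈ F then P.1 ⟨i, h⟩ else 0 :=
              (Finset.sum_coe_sort F (fun t => if h : t ∈ F then P.1 ⟨t, h⟩ else 0)).symm
            _ = ∑ i : ↥F, P.1 i := Finset.sum_congr rfl fun i _ => by simp [i.2]
            _ = k := P.2
        · intro i hi
          by_contra hmem
          simp [hmem] at hi⟩
      left_inv := fun f => by
        apply Subtype.ext
        funext t
        by_cases h : t ∈ F
        · simp [h]
        · have := (Finset.mem_piAntidiag.mp f.2).2 t
          simp only [h, dif_neg, not_false_iff]
          by_contra hne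
          exact h (this (Ne.symm hne))
      right_inv := fun P => by
        apply Subtype.ext
        funext i
        simp [i.2] }
  rw [Fintype.card_congr (e.trans (Sym.equivNatSumOfFintype ↥F k).symm),
    Sym.card_sym_eq_choose, Fintype.card_coe]

lemma main {n : ℕ} (k : ℕ) (i0 : Fin n) (F : Finset (Fin n)) (hi0 : i0 ∉ F)
    (S : Set (MvPolynomial (Fin n ⊕ Fin n) ℝ))
    (hS : S = {f | ∃ h : Fin n → ℕ, (∑ t ∈ F, h t) = k ∧
        f = ∏ t ∈ F, (xv i0 * xv t - yv i0 * yv t) ^ h t}) :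
    LinearIndependent ℝ ((↑) : S → MvPolynomial (Fin n ⊕ Fin n) ℝ) ∧
      Module.finrank ℝ (Submodule.span ℝ S) = (F.card + k - 1).choose k := by
  classical
  set P : (Fin n → ℕ) → MvPolynomial (Fin n ⊕ Fin n) ℝ :=
    fun h => ∏ t ∈ F, (xv i0 * xv t - yv i0 * yv t) ^ h t with hP
  -- key injectivity
  have key : ∀ h h' : Fin n → ℕ, (∑ t ∈ F, h t) = k → (∑ t ∈ F, h' t) = k →
      P h = P h' → ∀ t ∈ F, h t = h' t := by
    intro h h' hs hs' hPP t ht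
    have hphi : (phiY n) (∏ t ∈ F, (xv i0 * xv t - yv i0 * yv t) ^ h t)
        = (phiY n) (∏ t ∈ F, (xv i0 * xv t - yv i0 * yv t) ^ h' t) := congrArg _ hPP
    rw [phi_prod i0 F k h hs, phi_prod i0 F k h' hs'] at hphi
    have hD : Dfun i0 F k h = Dfun i0 F k h' :=
      MvPolynomial.monomial_left_injective (one_ne_zero) hphi
    rw [← D_apply i0 F hi0 k h ht, ← D_apply i0 F hi0 k h' ht, hD]
  -- S as coercion of a finite image
  set A : Finset (MvPolynomial (Fin n ⊕ Fin n) ℝ) := (F.piAntidiag k).image P with hA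
  have hSA : S = ↑A := by
    ext f
    simp only [hS, Set.mem_setOf_eq, hA, Finset.coe_image, Set.mem_image, Finset.mem_coe,
      Finset.mem_piAntidiag]
    constructor
    · rintro ⟨h, hsum, hf⟩
      refine ⟨fun t => if t ∈ F then h t else 0, ⟨?_, fun i hi => by
        by_contra hmem; simp [hmem] at hi⟩, ?_⟩
      · rw [← hsum]; exact Finset.sum_congr rfl fun t ht => by simp [ht]
      · rw [hf, hP]
        exact (Finset.prod_congr rfl fun t ht => by simp [ht]).symm
    · rintro ⟨g, ⟨hgsum, _⟩, hgf⟩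
      exact ⟨g, hgsum, hgf.symm⟩
  -- choose witnesses
  have hmem : ∀ f : S, ∃ h : Fin n → ℕ, (∑ t ∈ F, h t) = k ∧ (f : MvPolynomial _ ℝ) = P h := by
    intro f
    have hf : (f : MvPolynomial (Fin n ⊕ Fin n) ℝ) ∈ {f | ∃ h : Fin n → ℕ,
        (∑ t ∈ F, h t) = k ∧ f = ∏ t ∈ F, (xv i0 * xv t - yv i0 * yv t) ^ h t} := by
      rw [← hS]; exact f.2
    exact hf
  choose H h1 h2 using hmem
  set e : S → ((Fin n ⊕ Fin n) →₀ ℕ) := fun f => Dfun i0 F k (H f) with he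
  have hφ : ∀ f : S, (phiY n) (f : MvPolynomial _ ℝ) = monomial (e f) 1 := by
    intro f
    rw [h2 f, he]
    exact phi_prod i0 F k (H f) (h1 f)
  have einj : Function.Injective e := by
    intro f f' hee
    have hDD : Dfun i0 F k (H f) = Dfun i0 F k (H f') := hee
    have heq : ∀ t ∈ F, H f t = H f' t := by
      intro t ht
      rw [← D_apply i0 F hi0 k (H f) ht, ← D_apply i0 F hi0 k (H f') ht, hDD]
    apply Subtype.ext
    rw [h2 f, h2 f']
    exact Finset.prod_congr rfl fun t ht => by rw [heq t ht]
  have licomp : LinearIndependent ℝ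
      ((phiY n).toLinearMap ∘ ((↑) : S → MvPolynomial (Fin n ⊕ Fin n) ℝ)) := by
    have : (phiY n).toLinearMap ∘ ((↑) : S → MvPolynomial (Fin n ⊕ Fin n) ℝ)
        = fun f : S => (MvPolynomial.basisMonomials (Fin n ⊕ Fin n) ℝ) (e f) := by
      funext f
      simp only [Function.comp_apply, AlgHom.toLinearMap_apply, hφ f, coe_basisMonomials]
    rw [this]
    exact (MvPolynomial.basisMonomials (Fin n ⊕ Fin n) ℝ).linearIndependent.comp e einj
  have li : LinearIndependent ℝ ((↑) : S → MvPolynomial (Fin n ⊕ Fin n) ℝ) :=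
    LinearIndependent.of_comp (phiY n).toLinearMap licomp
  refine ⟨li, ?_⟩
  -- finrank
  have liA : LinearIndependent ℝ
      ((↑) : ↥((A : Set (MvPolynomial (Fin n ⊕ Fin n) ℝ))) → MvPolynomial (Fin n ⊕ Fin n) ℝ) := by
    rw [← hSA]; exact li
  rw [hSA, finrank_span_set_eq_card liA, Finset.toFinset_coe]
  have hinj : Set.InjOn P (F.piAntidiag k) := by
    intro g hg g' hg' hgg
    rw [Finset.mem_coe, Finset.mem_piAntidiag] at hg hg'
    funext t
    by_cases ht : t ∈ F
    · exact key g g' hg.1 hg'.1 hgg t ht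
    · rw [not_imp_comm.mp (hg.2 t) ht, not_imp_comm.mp (hg'.2 t) ht]
  rw [hA, Finset.card_image_of_injOn hinj, card_piAntidiag]

lemma filter_card_1 {n : ℕ} (hn : 2 ≤ n) :
    (Finset.univ.filter (fun t : Fin n => 0 < t.val)).card = n - 1 := by
  have h : (Finset.univ.filter (fun t : Fin n => 0 < t.val))
      = Finset.univ \ {(⟨0, by omega⟩ : Fin n)} := by
    ext t
    have := t.isLt
    simp [Fin.ext_iff]
    omega
  rw [h, Finset.card_sdiff_of_subset (by simp)]
  simp

lemma filter_card_2 {n : ℕ} (hn : 2 ≤ n) :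
    (Finset.univ.filter (fun t : Fin n => t.val < n - 1)).card = n - 1 := by
  have h : (Finset.univ.filter (fun t : Fin n => t.val < n - 1))
      = Finset.univ \ {(⟨n - 1, by omega⟩ : Fin n)} := by
    ext t
    have := t.isLt
    simp [Fin.ext_iff]
    omega
  rw [h, Finset.card_sdiff_of_subset (by simp)]
  simp

theorem stmt_1 (n : ℕ) (hn : 2 ≤ n) (k : ℕ) :
    (LinearIndependent ℝ ((↑) : S1 n k hn → MvPolynomial (Fin n ⊕ Fin n) ℝ) ∧
      Module.finrank ℝ (Submodule.span ℝ (S1 n k hn)) = Nat.choose (n - 2 + k) k) ∧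
    (LinearIndependent ℝ ((↑) : S2 n k hn → MvPolynomial (Fin n ⊕ Fin n) ℝ) ∧
      Module.finrank ℝ (Submodule.span ℝ (S2 n k hn)) = Nat.choose (n - 2 + k) k) := by
  have hcard : ∀ m : ℕ, m = n - 1 → (m + k - 1).choose k = (n - 2 + k).choose k := by
    intro m hm
    congr 1
    omega
  constructor
  · have h1 := main k (⟨0, by omega⟩ : Fin n)
      (Finset.univ.filter (fun t : Fin n => 0 < t.val))
      (by simp) (S1 n k hn) rfl
    rw [filter_card_1 hn, hcard (n - 1) rfl] at h1
    exact h1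
  · have hterm : ∀ (i : Fin n),
        xv i * xv (⟨n - 1, by omega⟩ : Fin n) - yv i * yv (⟨n - 1, by omega⟩ : Fin n)
          = xv (⟨n - 1, by omega⟩ : Fin n) * xv i - yv (⟨n - 1, by omega⟩ : Fin n) * yv i := by
      intro i
      rw [mul_comm (xv i), mul_comm (yv i)]
    have hSeq : S2 n k hn = {f | ∃ h : Fin n → ℕ,
        (∑ t ∈ Finset.univ.filter (fun t : Fin n => t.val < n - 1), h t) = k ∧
        f = ∏ t ∈ Finset.univ.filter (fun t : Fin n => t.val < n - 1),
          (xv (⟨n - 1, by omega⟩ : Fin n) * xv t - yv (⟨n - 1, by omega⟩ : Fin n) * yv t) ^ h t} := by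
      unfold S2
      ext f
      simp only [Set.mem_setOf_eq]
      refine exists_congr fun h => and_congr_right fun _ => ?_
      rw [Finset.prod_congr rfl fun t _ => by rw [hterm t]]
    have h2 := main k (⟨n - 1, by omega⟩ : Fin n)
      (Finset.univ.filter (fun t : Fin n => t.val < n - 1))
      (by simp) (S2 n k hn) hSeq
    rw [filter_card_2 hn, hcard (n - 1) rfl] at h2
    exact h2
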